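/- arXiv:1607.02873 — 4 statements merged into one kernel-verified Lean document; each statement's English description precedes it below -/
import Mathlib

section
/- Let I be a finitely generated ideal of the ring R = ℂ⟦z₁,…,z_m⟧ of formal power series, and let Ĩ be the ideal of ℂ⟦x₁,…,x_n,z₁,…,z_m⟧ generated by the image of I under the canonical inclusion R → ℂ⟦x,z⟧. Write f ∈ ℂ⟦x,z⟧ as f = Σ_α a_α x^α with coefficients a_α ∈ R (a_α is the coefficient of the monomial x^α when f is viewed as a power series in the x-variables over R). Then f ∈ Ĩ if and only if a_α ∈ I for every multi-index α. -/
/-- Let `I` be a finitely generated ideal of `R = ℂ⟦z₁,…,z_m⟧` and let `Ĩ` be the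
ideal of `ℂ⟦x₁,…,x_n,z₁,…,z_m⟧` (identified with the ring of formal power series in the
`x`-variables with coefficients in `R`) generated by the image of `I`. Writing
`f = Σ_α a_α x^α` with `a_α ∈ R`, one has `f ∈ Ĩ` if and only if `a_α ∈ I` for every
multi-index `α`. -/
theorem mem_ideal_map_C_iff_coeff_mem
    (n m : ℕ) (I : Ideal (MvPowerSeries (Fin m) ℂ)) (hI : I.FG)
    (f : MvPowerSeries (Fin n) (MvPowerSeries (Fin m) ℂ)) :
    f ∈ I.map (MvPowerSeries.C (σ := Fin n) (R := MvPowerSeries (Fin m) ℂ)) ↔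
      ∀ α : Fin n →₀ ℕ, MvPowerSeries.coeff (R := MvPowerSeries (Fin m) ℂ) α f ∈ I := by
  classical
  constructor
  · intro hf
    rw [Ideal.map] at hf
    refine Submodule.span_induction (p := fun x _ =>
        ∀ α : Fin n →₀ ℕ, MvPowerSeries.coeff (R := MvPowerSeries (Fin m) ℂ) α x ∈ I)
      ?_ ?_ ?_ ?_ hf
    · rintro x ⟨g, hg, rfl⟩ α
      rw [MvPowerSeries.coeff_C]
      split
      · exact hg
      · exact I.zero_mem
    · intro α; simp
    · intro x y _ _ hx hy α
      simpa using I.add_mem (hx α) (hy α)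
    · intro r x _ hx α
      rw [smul_eq_mul, MvPowerSeries.coeff_mul]
      exact Ideal.sum_mem _ fun p hp => I.mul_mem_left _ (hx p.2)
  · intro h
    obtain ⟨S, hS⟩ := hI
    have key : ∀ α : Fin n →₀ ℕ, ∃ c : MvPowerSeries (Fin m) ℂ → MvPowerSeries (Fin m) ℂ,
        ∑ g ∈ S, c g * g = MvPowerSeries.coeff α f := by
      intro α
      have hα := h α
      rw [← hS] at hα
      obtain ⟨c, -, hc⟩ := Submodule.mem_span_finset.mp hα
      exact ⟨c, by simpa [smul_eq_mul] using hc⟩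
    choose c hc using key
    have hphi : ∀ g : MvPowerSeries (Fin m) ℂ,
        ∃ φ : MvPowerSeries (Fin n) (MvPowerSeries (Fin m) ℂ),
          ∀ α, MvPowerSeries.coeff (R := MvPowerSeries (Fin m) ℂ) α φ = c α g :=
      fun g => ⟨fun α => c α g, fun α => rfl⟩
    choose φ hφ using hphi
    have hf : f = ∑ g ∈ S,
        MvPowerSeries.C (σ := Fin n) (R := MvPowerSeries (Fin m) ℂ) g * φ g := by
      apply MvPowerSeries.ext
      intro α
      simp only [map_sum, MvPowerSeries.coeff_C_mul, hφ]
      rw [← hc α]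
      exact Finset.sum_congr rfl fun g hg => (mul_comm _ _)
    rw [hf]
    refine Ideal.sum_mem _ fun g hg => Ideal.mul_mem_right _ _ ?_
    exact Ideal.mem_map_of_mem _ (hS ▸ Ideal.subset_span hg)
end

section
/- Let I be a finitely generated ideal of R = ℂ⟦z₁,…,z_m⟧ and let Ĩ be the ideal of ℂ⟦x₁,…,x_n,z₁,…,z_m⟧ generated by the image of I. Let a₁,…,a_{n−1} ∈ ℂ⟦x,z⟧ and let b, β₀ ∈ Ĩ with ∂β₀/∂x_n = 0. If β ∈ ℂ⟦x,z⟧ satisfies ∂β/∂x_n − Σ_{i=1}^{n−1} a_i ∂β/∂x_i = b and β − β₀ lies in the ideal generated by x_n, then β ∈ Ĩ. -/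
/-- The formal partial derivative `∂/∂x_i` on a multivariate formal power series ring. -/
noncomputable def mvDeriv {σ R : Type*} [CommRing R] (i : σ)
    (f : MvPowerSeries σ R) : MvPowerSeries σ R :=
  fun α => (α i + 1 : ℕ) • MvPowerSeries.coeff (R := R) (α + Finsupp.single i 1) f

lemma coeff_mem_of_mem_map_C {σ R : Type*} [CommRing R] {I : Ideal R}
    {f : MvPowerSeries σ R} (hf : f ∈ I.map (MvPowerSeries.C (σ := σ) (R := R))) :
    ∀ α, MvPowerSeries.coeff (R := R) α f ∈ I := by
  classical
  rw [Ideal.map, Ideal.span] at hf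
  refine Submodule.span_induction ?_ ?_ ?_ ?_ hf
  · rintro x ⟨r, hr, rfl⟩ α
    rw [MvPowerSeries.coeff_C]
    split_ifs
    · exact hr
    · exact I.zero_mem
  · intro α; simp
  · intro x y _ _ hx hy α
    rw [map_add]; exact I.add_mem (hx α) (hy α)
  · intro g x _ hx α
    rw [smul_eq_mul, MvPowerSeries.coeff_mul]
    exact Ideal.sum_mem _ fun p _ => I.mul_mem_left _ (hx p.2)

lemma mem_map_C_of_coeff_mem {σ R : Type*} [CommRing R] {I : Ideal R} (hI : I.FG)
    {f : MvPowerSeries σ R} (hf : ∀ α, MvPowerSeries.coeff (R := R) α f ∈ I) :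
    f ∈ I.map (MvPowerSeries.C (σ := σ) (R := R)) := by
  classical
  obtain ⟨S, hS⟩ := hI
  have hc : ∀ α, ∃ c : R → R, ∑ g ∈ S, c g * g = MvPowerSeries.coeff (R := R) α f := by
    intro α
    obtain ⟨c, -, hcc⟩ := Submodule.mem_span_finset.1 (hS ▸ hf α)
    exact ⟨c, by simpa [smul_eq_mul] using hcc⟩
  choose c hc using hc
  have hfe : f = ∑ g ∈ S, (show MvPowerSeries σ R from fun δ => c δ g) * MvPowerSeries.C (σ := σ) (R := R) g := by
    ext α
    rw [map_sum, ← hc α]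
    refine Finset.sum_congr rfl fun g _ => ?_
    rw [MvPowerSeries.coeff_mul_C]
    rfl
  rw [hfe]
  exact Ideal.sum_mem _ fun g hg =>
    Ideal.mul_mem_left _ _ (Ideal.mem_map_of_mem _ (hS ▸ Ideal.subset_span hg))

/-- Let `I` be a finitely generated ideal of `R = ℂ⟦z₁,…,z_m⟧` and let `Ĩ` be the
ideal of `ℂ⟦x₁,…,x_n,z₁,…,z_m⟧` generated by the image of `I` (here the `x`-variables are
indexed by `Fin (n+1)`, the last one playing the role of `x_n`, and `ℂ⟦x,z⟧` is identified
with the ring of formal power series in the `x`-variables with coefficients in `R`).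
Let `a₁,…,a_{n−1} ∈ ℂ⟦x,z⟧`, `b, β₀ ∈ Ĩ` with `∂β₀/∂x_n = 0`.  If `β` satisfies
`∂β/∂x_n − Σᵢ aᵢ ∂β/∂xᵢ = b` and `β − β₀ ∈ (x_n)`, then `β ∈ Ĩ`. -/
theorem solution_of_cauchy_problem_mem_ideal_map_C
    (n m : ℕ) (I : Ideal (MvPowerSeries (Fin m) ℂ)) (hI : I.FG)
    (a : Fin n → MvPowerSeries (Fin (n + 1)) (MvPowerSeries (Fin m) ℂ))
    (b β₀ β : MvPowerSeries (Fin (n + 1)) (MvPowerSeries (Fin m) ℂ))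
    (hb : b ∈ I.map (MvPowerSeries.C (σ := Fin (n + 1)) (R := MvPowerSeries (Fin m) ℂ)))
    (hβ₀ : β₀ ∈ I.map (MvPowerSeries.C (σ := Fin (n + 1)) (R := MvPowerSeries (Fin m) ℂ)))
    (hβ₀d : mvDeriv (Fin.last n) β₀ = 0)
    (heq : mvDeriv (Fin.last n) β - ∑ i : Fin n, a i * mvDeriv i.castSucc β = b)
    (hinit : β - β₀ ∈ Ideal.span
      {MvPowerSeries.X (R := MvPowerSeries (Fin m) ℂ) (Fin.last n)}) :
    β ∈ I.map (MvPowerSeries.C (σ := Fin (n + 1)) (R := MvPowerSeries (Fin m) ℂ)) := by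
  classical
  have hbc := coeff_mem_of_mem_map_C hb
  have hβ₀c := coeff_mem_of_mem_map_C hβ₀
  obtain ⟨q, hq⟩ := Ideal.mem_span_singleton.1 hinit
  have key : ∀ k : ℕ, ∀ α : Fin (n + 1) →₀ ℕ, α (Fin.last n) = k →
      MvPowerSeries.coeff (R := MvPowerSeries (Fin m) ℂ) α β ∈ I := by
    intro k
    induction k using Nat.strong_induction_on with
    | _ k ih =>
      cases k with
      | zero =>
        intro α hα
        have hX0 : MvPowerSeries.coeff (R := MvPowerSeries (Fin m) ℂ) α (MvPowerSeries.X (Fin.last n) * q) = 0 := by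
          rw [MvPowerSeries.coeff_mul]
          refine Finset.sum_eq_zero fun p hp => ?_
          rcases eq_or_ne p.1 (Finsupp.single (Fin.last n) 1) with h | h
          · exfalso
            have h2 := Finset.HasAntidiagonal.mem_antidiagonal.1 hp
            have h3 : α (Fin.last n) = p.1 (Fin.last n) + p.2 (Fin.last n) := by
              rw [← h2]; rfl
            rw [h, Finsupp.single_apply, if_pos rfl] at h3
            omega
          · rw [MvPowerSeries.coeff_X, if_neg h, zero_mul]
        have hββ₀ : MvPowerSeries.coeff (R := MvPowerSeries (Fin m) ℂ) α β = MvPowerSeries.coeff (R := MvPowerSeries (Fin m) ℂ) α β₀ := by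
          have h4 := congrArg (MvPowerSeries.coeff (R := MvPowerSeries (Fin m) ℂ) α) hq
          rw [map_sub, hX0, sub_eq_zero] at h4
          exact h4
        rw [hββ₀]; exact hβ₀c α
      | succ k =>
        intro α hα
        set α' : Fin (n + 1) →₀ ℕ := α - Finsupp.single (Fin.last n) 1 with hα'def
        have hα'k : α' (Fin.last n) = k := by
          rw [hα'def, Finsupp.tsub_apply, Finsupp.single_apply, if_pos rfl]
          omega
        have hαα' : α' + Finsupp.single (Fin.last n) 1 = α := by
          ext j
          rw [Finsupp.add_apply, hα'def, Finsupp.tsub_apply, Finsupp.single_apply]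
          split_ifs with hj
          · subst hj
            omega
          · omega
        have hd : MvPowerSeries.coeff (R := MvPowerSeries (Fin m) ℂ) α' (mvDeriv (Fin.last n) β)
            = (k + 1) • MvPowerSeries.coeff (R := MvPowerSeries (Fin m) ℂ) α β := by
          show (α' (Fin.last n) + 1) •
              MvPowerSeries.coeff (R := MvPowerSeries (Fin m) ℂ) (α' + Finsupp.single (Fin.last n) 1) β = _
          rw [hα'k, hαα']
        have h := congrArg (MvPowerSeries.coeff (R := MvPowerSeries (Fin m) ℂ) α') heq
        rw [map_sub, hd, sub_eq_iff_eq_add] at h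
        have hmem : (k + 1) • MvPowerSeries.coeff (R := MvPowerSeries (Fin m) ℂ) α β ∈ I := by
          rw [h]
          refine I.add_mem (hbc α') ?_
          rw [map_sum]
          refine Ideal.sum_mem _ fun i _ => ?_
          rw [MvPowerSeries.coeff_mul]
          refine Ideal.sum_mem _ fun p hp => ?_
          have h2 := Finset.HasAntidiagonal.mem_antidiagonal.1 hp
          have hcd : MvPowerSeries.coeff (R := MvPowerSeries (Fin m) ℂ) p.2 (mvDeriv i.castSucc β)
              = (p.2 i.castSucc + 1) •
                MvPowerSeries.coeff (R := MvPowerSeries (Fin m) ℂ) (p.2 + (Finsupp.single i.castSucc 1 : Fin (n + 1) →₀ ℕ)) β := rfl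
          have hlast : (p.2 + (Finsupp.single i.castSucc 1 : Fin (n + 1) →₀ ℕ)) (Fin.last n) = p.2 (Fin.last n) := by
            rw [Finsupp.add_apply, Finsupp.single_apply,
              if_neg (Fin.castSucc_lt_last i).ne, add_zero]
          have hlt : p.2 (Fin.last n) < k + 1 := by
            have h3 : p.1 (Fin.last n) + p.2 (Fin.last n) = k := by
              have : (p.1 + p.2) (Fin.last n) = α' (Fin.last n) := by rw [h2]
              rw [Finsupp.add_apply] at this
              omega
            omega
          have hmem' := ih (p.2 (Fin.last n)) hlt _ hlast
          rw [hcd]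
          exact I.mul_mem_left _ (nsmul_mem hmem' _)
        have hcast : MvPowerSeries.coeff (R := MvPowerSeries (Fin m) ℂ) α β
            = (((k + 1 : ℕ) : ℂ))⁻¹ • (((k + 1 : ℕ) : ℂ) • MvPowerSeries.coeff (R := MvPowerSeries (Fin m) ℂ) α β) := by
          rw [smul_smul, inv_mul_cancel₀ (Nat.cast_ne_zero.2 (Nat.succ_ne_zero k)), one_smul]
        rw [hcast, Nat.cast_smul_eq_nsmul, Algebra.smul_def]
        exact I.mul_mem_left _ hmem
  exact mem_map_C_of_coeff_mem hI fun α => key (α (Fin.last n)) α rfl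
end

section
/- (Formal Cauchy–Kowalevski theorem with parameters.) Let a₁,…,a_{n−1}, b ∈ ℂ⟦x₁,…,x_n,z₁,…,z_m⟧ and let g ∈ ℂ⟦x,z⟧ with ∂g/∂x_n = 0. Then there exists one and only one f ∈ ℂ⟦x,z⟧ such that ∂f/∂x_n + Σ_{i=1}^{n−1} a_i ∂f/∂x_i = b and f − g lies in the ideal generated by x_n. -/
namespace CKAux

open MvPowerSeries Finset

abbrev Rm (m : ℕ) := MvPowerSeries (Fin m) ℂ

variable (n m : ℕ)
    (a : Fin n → MvPowerSeries (Fin (n + 1)) (Rm m))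
    (b g : MvPowerSeries (Fin (n + 1)) (Rm m))

/-- The coefficient of `∑ i, a i * ∂f/∂x_i` at `β`, as a function of the coefficients of `f`. -/
noncomputable def S (c : (Fin (n + 1) →₀ ℕ) → Rm m) (β : Fin (n + 1) →₀ ℕ) : Rm m :=
  ∑ i : Fin n, ∑ p ∈ antidiagonal β,
    MvPowerSeries.coeff p.1 (a i) *
      ((p.2 i.castSucc + 1) • c (p.2 + Finsupp.single i.castSucc 1))

lemma S_congr {c₁ c₂ : (Fin (n + 1) →₀ ℕ) → Rm m} {β : Fin (n + 1) →₀ ℕ}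
    (h : ∀ γ : Fin (n + 1) →₀ ℕ, γ (Fin.last n) ≤ β (Fin.last n) → c₁ γ = c₂ γ) :
    S n m a c₁ β = S n m a c₂ β := by
  unfold S
  refine Finset.sum_congr rfl fun i _ => Finset.sum_congr rfl fun p hp => ?_
  have hp' := Finset.HasAntidiagonal.mem_antidiagonal.mp hp
  have h2 : p.2 (Fin.last n) ≤ β (Fin.last n) := by
    have := congrArg (fun δ : Fin (n + 1) →₀ ℕ => δ (Fin.last n)) hp'
    simp only [Finsupp.add_apply] at this
    omega
  have hne : i.castSucc ≠ Fin.last n := (Fin.castSucc_lt_last i).ne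
  have h3 : ((p.2 + Finsupp.single i.castSucc 1 : Fin (n + 1) →₀ ℕ)) (Fin.last n) = p.2 (Fin.last n) := by
    simp [Finsupp.add_apply, Finsupp.single_apply, hne]
  rw [h (p.2 + Finsupp.single i.castSucc 1) (by omega)]

/-- The recursively defined coefficients: `F k` is correct on multi-indices whose last
coordinate is at most `k`. -/
noncomputable def F : ℕ → (Fin (n + 1) →₀ ℕ) → Rm m
  | 0 => fun α => MvPowerSeries.coeff α g
  | (k + 1) => fun α =>
      if α (Fin.last n) ≤ k then F k α
      else ((α (Fin.last n) : ℂ))⁻¹ •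
        (MvPowerSeries.coeff (α - Finsupp.single (Fin.last n) 1) b -
          S n m a (F k) (α - Finsupp.single (Fin.last n) 1))

/-- The solution, as a family of coefficients. -/
noncomputable def sol : (Fin (n + 1) →₀ ℕ) → Rm m :=
  fun α => F n m a b g (α (Fin.last n)) α

lemma F_consist : ∀ k (α : Fin (n + 1) →₀ ℕ), α (Fin.last n) ≤ k →
    F n m a b g k α = sol n m a b g α := by
  intro k
  induction k with
  | zero => intro α hα; unfold sol; rw [Nat.le_zero.mp hα]
  | succ k ih =>
    intro α hα
    by_cases h : α (Fin.last n) ≤ k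
    · rw [show F n m a b g (k + 1) α = F n m a b g k α from if_pos h, ih α h]
    · have : α (Fin.last n) = k + 1 := by omega
      unfold sol; rw [this]

lemma apply_add_single (β : Fin (n + 1) →₀ ℕ) :
    ((β + Finsupp.single (Fin.last n) 1 : Fin (n + 1) →₀ ℕ)) (Fin.last n) = β (Fin.last n) + 1 := by
  simp [Finsupp.add_apply]

/-- The key coefficientwise recursion satisfied by `sol`. -/
lemma key (β : Fin (n + 1) →₀ ℕ) :
    (β (Fin.last n) + 1 : ℕ) • sol n m a b g (β + Finsupp.single (Fin.last n) 1) =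
      MvPowerSeries.coeff β b - S n m a (sol n m a b g) β := by
  set α := β + Finsupp.single (Fin.last n) 1 with hαdef
  have hα : α (Fin.last n) = β (Fin.last n) + 1 := apply_add_single n β
  have hβ : α - Finsupp.single (Fin.last n) 1 = β := add_tsub_cancel_right β _
  have h1 : sol n m a b g α = F n m a b g (β (Fin.last n) + 1) α := by unfold sol; rw [hα]
  have h2 : F n m a b g (β (Fin.last n) + 1) α =
      ((α (Fin.last n) : ℂ))⁻¹ • (MvPowerSeries.coeff β b - S n m a (F n m a b g (β (Fin.last n))) β) := by
    show (if α (Fin.last n) ≤ β (Fin.last n) then _ else _) = _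
    rw [if_neg (by omega), hβ]
  have h3 : S n m a (F n m a b g (β (Fin.last n))) β = S n m a (sol n m a b g) β := by
    apply S_congr
    intro γ hγ
    exact F_consist n m a b g (β (Fin.last n)) γ hγ
  rw [h1, h2, h3, hα]
  rw [← Nat.cast_smul_eq_nsmul ℂ, smul_smul, mul_inv_cancel₀, one_smul]
  exact_mod_cast Nat.succ_ne_zero (β (Fin.last n))

/-- The PDE, coefficientwise. -/
lemma pde_iff (f : MvPowerSeries (Fin (n + 1)) (Rm m)) :
    (mvDeriv (Fin.last n) f + ∑ i : Fin n, a i * mvDeriv i.castSucc f = b) ↔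
      ∀ β : Fin (n + 1) →₀ ℕ,
        (β (Fin.last n) + 1 : ℕ) •
            MvPowerSeries.coeff (β + Finsupp.single (Fin.last n) 1) f +
          S n m a (fun γ => MvPowerSeries.coeff γ f) β = MvPowerSeries.coeff β b := by
  rw [MvPowerSeries.ext_iff]
  apply forall_congr'
  intro β
  rw [map_add, map_sum]
  have h1 : MvPowerSeries.coeff β (mvDeriv (Fin.last n) f) =
      (β (Fin.last n) + 1 : ℕ) •
        MvPowerSeries.coeff (β + Finsupp.single (Fin.last n) 1) f := rfl
  have h2 : ∀ i : Fin n, MvPowerSeries.coeff β (a i * mvDeriv i.castSucc f) =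
      ∑ p ∈ antidiagonal β, MvPowerSeries.coeff p.1 (a i) *
        ((p.2 i.castSucc + 1) •
          MvPowerSeries.coeff (p.2 + Finsupp.single i.castSucc 1) f) := by
    intro i
    rw [MvPowerSeries.coeff_mul]
    exact Finset.sum_congr rfl fun p _ => rfl
  rw [h1]
  simp only [h2]
  rfl

end CKAux

/-- formal Cauchy–Kowalevski theorem with parameters:
Let `a₁,…,a_{n−1}, b ∈ ℂ⟦x₁,…,x_n,z₁,…,z_m⟧` and let `g` satisfy `∂g/∂x_n = 0`
(here the `x`-variables are indexed by `Fin (n+1)`, the last one playing the role of `x_n`,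
and `ℂ⟦x,z⟧` is identified with the ring of formal power series in the `x`-variables with
coefficients in `ℂ⟦z⟧`).  Then there is one and only one `f ∈ ℂ⟦x,z⟧` with
`∂f/∂x_n + Σᵢ aᵢ ∂f/∂xᵢ = b` and `f − g ∈ (x_n)`. -/
theorem formal_cauchy_kowalevski
    (n m : ℕ)
    (a : Fin n → MvPowerSeries (Fin (n + 1)) (MvPowerSeries (Fin m) ℂ))
    (b g : MvPowerSeries (Fin (n + 1)) (MvPowerSeries (Fin m) ℂ))
    (hg : mvDeriv (Fin.last n) g = 0) :
    ∃! f : MvPowerSeries (Fin (n + 1)) (MvPowerSeries (Fin m) ℂ),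
      mvDeriv (Fin.last n) f + ∑ i : Fin n, a i * mvDeriv i.castSucc f = b ∧
      f - g ∈ Ideal.span
        {MvPowerSeries.X (R := MvPowerSeries (Fin m) ℂ) (Fin.last n)} := by
  classical
  set f : MvPowerSeries (Fin (n + 1)) (MvPowerSeries (Fin m) ℂ) := CKAux.sol n m a b g
    with hf
  have hcoef : ∀ γ : Fin (n + 1) →₀ ℕ, MvPowerSeries.coeff γ f = CKAux.sol n m a b g γ :=
    fun γ => rfl
  have hzero : ∀ α : Fin (n + 1) →₀ ℕ, α (Fin.last n) = 0 →
      CKAux.sol n m a b g α = MvPowerSeries.coeff α g := by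
    intro α hα
    unfold CKAux.sol
    rw [hα]
    rfl
  refine ⟨f, ⟨?_, ?_⟩, ?_⟩
  · rw [CKAux.pde_iff]
    intro β
    simp only [hcoef]
    rw [CKAux.key n m a b g β]
    ring
  · rw [Ideal.mem_span_singleton, MvPowerSeries.X_dvd_iff]
    intro α hα
    rw [map_sub, hcoef, hzero α hα, sub_self]
  · rintro f' ⟨hpde, hmem⟩
    rw [CKAux.pde_iff] at hpde
    rw [Ideal.mem_span_singleton, MvPowerSeries.X_dvd_iff] at hmem
    apply MvPowerSeries.ext
    intro α
    rw [hcoef]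
    -- strong induction on the last coordinate
    suffices H : ∀ k, ∀ α : Fin (n + 1) →₀ ℕ, α (Fin.last n) = k →
        MvPowerSeries.coeff α f' = CKAux.sol n m a b g α from H (α (Fin.last n)) α rfl
    intro k
    induction k using Nat.strong_induction_on with
    | _ k ih =>
      intro α hα
      match k, hα with
      | 0, hα =>
        have := hmem α hα
        rw [map_sub, sub_eq_zero] at this
        rw [this, hzero α hα]
      | k + 1, hα =>
        have hle : Finsupp.single (Fin.last n) 1 ≤ α := by
          rw [Finsupp.single_le_iff]; omega
        set β := α - Finsupp.single (Fin.last n) 1 with hβdef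
        have hβα : β + Finsupp.single (Fin.last n) 1 = α := tsub_add_cancel_of_le hle
        have hβl : β (Fin.last n) = k := by
          have := CKAux.apply_add_single n β
          rw [hβα] at this
          omega
        have heq := hpde β
        rw [hβα] at heq
        have hS : CKAux.S n m a (fun γ => MvPowerSeries.coeff γ f') β =
            CKAux.S n m a (CKAux.sol n m a b g) β := by
          apply CKAux.S_congr
          intro γ hγ
          exact ih (γ (Fin.last n)) (by omega) γ rfl
        rw [hS] at heq
        have h1 : (β (Fin.last n) + 1 : ℕ) • MvPowerSeries.coeff α f' =
            MvPowerSeries.coeff β b - CKAux.S n m a (CKAux.sol n m a b g) β :=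
          eq_sub_of_add_eq heq
        have h3 : (β (Fin.last n) + 1 : ℕ) • MvPowerSeries.coeff α f' =
            (β (Fin.last n) + 1 : ℕ) • CKAux.sol n m a b g (β + Finsupp.single (Fin.last n) 1) :=
          h1.trans (CKAux.key n m a b g β).symm
        rw [hβα] at h3
        have hinj : Function.Injective
            (fun x : MvPowerSeries (Fin m) ℂ => ((β (Fin.last n) + 1 : ℕ) : ℂ) • x) :=
          smul_right_injective _ (by exact_mod_cast Nat.succ_ne_zero (β (Fin.last n)))
        apply hinj
        simp only [Nat.cast_smul_eq_nsmul]
        exact h3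
end

section
/- Let I be a finitely generated ideal of R = ℂ⟦z₁,…,z_m⟧ and let Ĩ be the ideal of ℂ⟦x₁,…,x_n,z₁,…,z_m⟧ generated by the image of I. Let a₁,…,a_{n−1}, b ∈ ℂ⟦x,z⟧. If f₁, f₂ ∈ ℂ⟦x,z⟧ both satisfy ∂f_j/∂x_n + Σ_{i=1}^{n−1} a_i ∂f_j/∂x_i ≡ b (mod Ĩ) for j = 1, 2, and f₁ − f₂ ∈ Ĩ + (x_n), then f₁ − f₂ ∈ Ĩ. In other words, the Cauchy problem ∂f/∂x_n + Σ a_i ∂f/∂x_i = b with prescribed class of f modulo (x_n) has at most one solution in the quotient ring ℂ⟦x,z⟧/Ĩ. -/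
open MvPowerSeries Finsupp

lemma coeff_mvDeriv {σ R : Type*} [CommRing R] (i : σ) (f : MvPowerSeries σ R) (α : σ →₀ ℕ) :
    MvPowerSeries.coeff (R := R) α (mvDeriv i f)
      = (α i + 1 : ℕ) • MvPowerSeries.coeff (R := R) (α + Finsupp.single i 1) f := rfl

lemma mvDeriv_sub {σ R : Type*} [CommRing R] (i : σ) (f g : MvPowerSeries σ R) :
    mvDeriv i (f - g) = mvDeriv i f - mvDeriv i g := by
  ext α
  simp only [coeff_mvDeriv, map_sub, smul_sub]

lemma coeff_mem_of_mem_map {σ R : Type*} [CommRing R] {I : Ideal R}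
    {f : MvPowerSeries σ R} (hf : f ∈ I.map (MvPowerSeries.C (σ := σ) (R := R))) (α : σ →₀ ℕ) :
    MvPowerSeries.coeff (R := R) α f ∈ I := by
  classical
  have hf' : f ∈ Submodule.span (MvPowerSeries σ R) ((MvPowerSeries.C (σ := σ) (R := R)) '' (I : Set R)) := hf
  clear hf
  induction hf' using Submodule.span_induction generalizing α with
  | mem x hx =>
    obtain ⟨r, hr, rfl⟩ := hx
    rw [MvPowerSeries.coeff_C]
    split
    · exact hr
    · simp
  | zero => simp
  | add x y _ _ hx hy => simpa using I.add_mem (hx α) (hy α)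
  | smul a x _ hx =>
    rw [smul_eq_mul, MvPowerSeries.coeff_mul]
    exact Ideal.sum_mem _ fun p _ => I.mul_mem_left _ (hx p.2)

lemma mem_map_of_coeff_mem {σ R : Type*} [CommRing R] {I : Ideal R} (hI : I.FG)
    {f : MvPowerSeries σ R} (h : ∀ α, MvPowerSeries.coeff (R := R) α f ∈ I) :
    f ∈ I.map (MvPowerSeries.C (σ := σ) (R := R)) := by
  obtain ⟨s, rfl⟩ := hI
  have hc : ∀ α : σ →₀ ℕ, ∃ c : R → R, ∑ i ∈ s, c i • i = MvPowerSeries.coeff (R := R) α f :=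
    fun α => (Submodule.mem_span_finset.mp (h α)).imp fun _ h => h.2
  choose c hc using hc
  let H : R → MvPowerSeries σ R := fun g α => c α g
  have hf : f = ∑ g ∈ s, (H g * MvPowerSeries.C (σ := σ) (R := R) g) := by
    ext α
    rw [map_sum]
    simp only [MvPowerSeries.coeff_mul_C]
    have hH : ∀ g : R, MvPowerSeries.coeff (R := R) α (H g) = c α g := fun g => rfl
    simp only [hH]
    simpa [smul_eq_mul] using (hc α).symm
  rw [hf]
  exact Ideal.sum_mem _ fun g hg => Ideal.mul_mem_left _ _
    (Ideal.mem_map_of_mem _ (Ideal.subset_span hg))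

/-- Let `I` be a finitely generated ideal of `R = ℂ⟦z₁,…,z_m⟧` and let `Ĩ` be the
ideal of `ℂ⟦x₁,…,x_n,z₁,…,z_m⟧` generated by the image of `I` (the `x`-variables are indexed
by `Fin (n+1)`, the last playing the role of `x_n`).  Let `a₁,…,a_{n−1}, b ∈ ℂ⟦x,z⟧`.
If `f₁, f₂` both satisfy `∂f_j/∂x_n + Σᵢ aᵢ ∂f_j/∂xᵢ ≡ b (mod Ĩ)` and
`f₁ − f₂ ∈ Ĩ + (x_n)`, then `f₁ − f₂ ∈ Ĩ`: the Cauchy problem has at most one solution in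
`ℂ⟦x,z⟧/Ĩ`. -/
theorem cauchy_problem_uniqueness_mod_ideal
    (n m : ℕ) (I : Ideal (MvPowerSeries (Fin m) ℂ)) (hI : I.FG)
    (a : Fin n → MvPowerSeries (Fin (n + 1)) (MvPowerSeries (Fin m) ℂ))
    (b f₁ f₂ : MvPowerSeries (Fin (n + 1)) (MvPowerSeries (Fin m) ℂ))
    (h₁ : mvDeriv (Fin.last n) f₁ + ∑ i : Fin n, a i * mvDeriv i.castSucc f₁ - b ∈
      I.map (MvPowerSeries.C (σ := Fin (n + 1)) (R := MvPowerSeries (Fin m) ℂ)))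
    (h₂ : mvDeriv (Fin.last n) f₂ + ∑ i : Fin n, a i * mvDeriv i.castSucc f₂ - b ∈
      I.map (MvPowerSeries.C (σ := Fin (n + 1)) (R := MvPowerSeries (Fin m) ℂ)))
    (hinit : f₁ - f₂ ∈
      I.map (MvPowerSeries.C (σ := Fin (n + 1)) (R := MvPowerSeries (Fin m) ℂ)) ⊔
        Ideal.span {MvPowerSeries.X (R := MvPowerSeries (Fin m) ℂ) (Fin.last n)}) :
    f₁ - f₂ ∈ I.map (MvPowerSeries.C (σ := Fin (n + 1)) (R := MvPowerSeries (Fin m) ℂ)) := by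
  classical
  have hD : mvDeriv (Fin.last n) (f₁ - f₂)
      + ∑ i : Fin n, a i * mvDeriv i.castSucc (f₁ - f₂) ∈
      I.map (MvPowerSeries.C (σ := Fin (n + 1)) (R := MvPowerSeries (Fin m) ℂ)) := by
    have hsub := Ideal.sub_mem _ h₁ h₂
    convert hsub using 1
    simp only [mvDeriv_sub, mul_sub]
    rw [Finset.sum_sub_distrib]
    ring
  have key : ∀ k : ℕ, ∀ α : Fin (n + 1) →₀ ℕ, α (Fin.last n) = k →
      MvPowerSeries.coeff (R := MvPowerSeries (Fin m) ℂ) α (f₁ - f₂) ∈ I := by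
    intro k
    induction k using Nat.strong_induction_on with
    | _ k ih =>
      intro α hα
      rcases k with _ | j
      · -- base case: α (last) = 0
        obtain ⟨p, hp, q, hq, hpq⟩ := Submodule.mem_sup.mp hinit
        have hq0 : MvPowerSeries.coeff (R := MvPowerSeries (Fin m) ℂ) α q = 0 := by
          obtain ⟨h, rfl⟩ := Ideal.mem_span_singleton'.mp hq
          rw [MvPowerSeries.coeff_mul]
          refine Finset.sum_eq_zero fun p' hp' => ?_
          rw [Finset.HasAntidiagonal.mem_antidiagonal] at hp'
          rw [MvPowerSeries.coeff_X, if_neg, mul_zero]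
          intro h'
          have h1 : (p'.1 + p'.2) (Fin.last n) = α (Fin.last n) := by rw [hp']
          rw [Finsupp.add_apply, h', Finsupp.single_eq_same, hα] at h1
          omega
        rw [← hpq, map_add, hq0, add_zero]
        exact coeff_mem_of_mem_map hp α
      · -- inductive step
        set β := α.update (Fin.last n) j with hβdef
        have hβ : β (Fin.last n) = j := by simp [hβdef]
        have hβα : β + Finsupp.single (Fin.last n) 1 = α := by
          ext x
          rw [Finsupp.add_apply, Finsupp.single_apply]
          by_cases hx : x = Fin.last n
          · subst hx
            simp [hβ, hα]
          · simp [hβdef, Finsupp.update, Function.update, hx, Ne.symm hx]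
        have hcoeff := coeff_mem_of_mem_map hD β
        rw [map_add, coeff_mvDeriv, hβα, map_sum] at hcoeff
        have hsum : ∑ i : Fin n,
            MvPowerSeries.coeff (R := MvPowerSeries (Fin m) ℂ) β
              (a i * mvDeriv i.castSucc (f₁ - f₂)) ∈ I := by
          refine Ideal.sum_mem _ fun i _ => ?_
          rw [MvPowerSeries.coeff_mul]
          refine Ideal.sum_mem _ fun p hp => ?_
          rw [Finset.HasAntidiagonal.mem_antidiagonal] at hp
          rw [coeff_mvDeriv]
          refine Ideal.mul_mem_left _ _ ?_
          have hmem : MvPowerSeries.coeff (R := MvPowerSeries (Fin m) ℂ)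
              (p.2 + Finsupp.single i.castSucc 1) (f₁ - f₂) ∈ I := by
            refine ih (p.2 (Fin.last n)) ?_ _ ?_
            · have h1 : (p.1 + p.2) (Fin.last n) = β (Fin.last n) := by rw [hp]
              rw [Finsupp.add_apply, hβ] at h1
              omega
            · rw [Finsupp.add_apply, Finsupp.single_apply, if_neg, add_zero]
              exact (Fin.castSucc_lt_last i).ne
          rw [nsmul_eq_mul]
          exact I.mul_mem_left _ hmem
        have hfin : ((j + 1 : ℕ) : MvPowerSeries (Fin m) ℂ)
            * MvPowerSeries.coeff (R := MvPowerSeries (Fin m) ℂ) α (f₁ - f₂) ∈ I := by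
          have hx := Ideal.sub_mem _ hcoeff hsum
          rw [add_sub_cancel_right, hβ, nsmul_eq_mul] at hx
          exact hx
        have heq : MvPowerSeries.coeff (R := MvPowerSeries (Fin m) ℂ) α (f₁ - f₂)
            = (MvPowerSeries.C (σ := Fin m) (R := ℂ)) (((j : ℂ) + 1)⁻¹)
              * (((j + 1 : ℕ) : MvPowerSeries (Fin m) ℂ)
                  * MvPowerSeries.coeff (R := MvPowerSeries (Fin m) ℂ) α (f₁ - f₂)) := by
          rw [← mul_assoc]
          have hcast : ((j + 1 : ℕ) : MvPowerSeries (Fin m) ℂ)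
              = MvPowerSeries.C (σ := Fin m) (R := ℂ) ((j : ℂ) + 1) := by
            push_cast
            simp
          rw [hcast, ← map_mul, inv_mul_cancel₀ (by exact_mod_cast Nat.succ_ne_zero j : ((j : ℂ) + 1) ≠ 0)]
          simp
        rw [heq]
        exact I.mul_mem_left _ hfin
  exact mem_map_of_coeff_mem hI fun α => key (α (Fin.last n)) α rfl
end
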